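/- Let n ≥ 1, λ₁ > 2, and 0 < α ≤ n(λ₁ - 2)/2. Choose ε₁ > 0 with 2n + 2α ≤ 2n + 2ε₁ ≤ nλ₁. Then for all t₁ > 0 and all x₁, z₁ ∈ ℝⁿ, ∫_{ℝⁿ} ∫_{ℝⁿ} (t₁/(t₁ + |x₁ - y₁|))^{nλ₁/2} · t₁^α/(t₁ + |y₁ - z₁|)^{n+α} dy₁ dx₁ ≤ C t₁ⁿ, where C depends only on n, λ₁, α. -/

import Mathlib

open MeasureTheory Real Set

noncomputable section

lemma key_int (n : ℕ) {t q : ℝ} (ht : 0 < t) (hq : (n : ℝ) < q) :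
    Integrable (fun u : EuclideanSpace ℝ (Fin n) => (t + ‖u‖) ^ (-q)) ∧
    (∫ u : EuclideanSpace ℝ (Fin n), (t + ‖u‖) ^ (-q)) =
      t ^ ((n : ℝ) - q) * ∫ u : EuclideanSpace ℝ (Fin n), (1 + ‖u‖) ^ (-q) := by
  set E := EuclideanSpace ℝ (Fin n)
  have hfin : (Module.finrank ℝ E : ℝ) = (n : ℝ) := by
    simp [E, finrank_euclideanSpace_fin]
  have he : ∀ u : E, (t + ‖t • u‖) ^ (-q) = t ^ (-q) * (1 + ‖u‖) ^ (-q) := by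
    intro u
    rw [norm_smul, Real.norm_eq_abs, abs_of_pos ht,
      show t + t * ‖u‖ = t * (1 + ‖u‖) by ring,
      Real.mul_rpow ht.le (by positivity)]
  have hone : Integrable (fun u : E => (1 + ‖u‖) ^ (-q)) :=
    integrable_one_add_norm (by rw [hfin]; exact hq)
  have hint1 : Integrable (fun u : E => (t + ‖t • u‖) ^ (-q)) := by
    simp_rw [he]; exact hone.const_mul _
  have hI : Integrable (fun u : E => (t + ‖u‖) ^ (-q)) :=
    (integrable_comp_smul_iff volume (fun u : E => (t + ‖u‖) ^ (-q)) ht.ne').mp hint1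
  refine ⟨hI, ?_⟩
  have h2 := Measure.integral_comp_smul_of_nonneg (volume : Measure E)
    (fun u : E => (t + ‖u‖) ^ (-q)) t (hR := ht.le)
  simp_rw [he] at h2
  rw [integral_const_mul] at h2
  have hpow : ((t : ℝ) ^ Module.finrank ℝ E)⁻¹ = t ^ (-(n : ℝ)) := by
    rw [← Real.rpow_natCast t, ← Real.rpow_neg ht.le, hfin]
  rw [hpow, smul_eq_mul] at h2
  rw [show ((n : ℝ) - q) = (n : ℝ) + (-q) by ring, Real.rpow_add ht, mul_assoc, h2,
    ← mul_assoc, ← Real.rpow_add ht]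
  simp
  rfl

theorem stmt1 (n : ℕ) (hn : 1 ≤ n) (lam₁ α ε₁ : ℝ) (hlam : 2 < lam₁) (hα : 0 < α)
    (hαn : α ≤ (n : ℝ) * (lam₁ - 2) / 2) (hε₁ : 0 < ε₁)
    (hε₁l : 2 * (n : ℝ) + 2 * α ≤ 2 * (n : ℝ) + 2 * ε₁)
    (hε₁u : 2 * (n : ℝ) + 2 * ε₁ ≤ (n : ℝ) * lam₁) :
    ∃ C > 0, ∀ (t₁ : ℝ), 0 < t₁ → ∀ x₁ z₁ : EuclideanSpace ℝ (Fin n),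
      (∫ x₁ : EuclideanSpace ℝ (Fin n), ∫ y₁ : EuclideanSpace ℝ (Fin n),
          (t₁ / (t₁ + ‖x₁ - y₁‖)) ^ ((n : ℝ) * lam₁ / 2) *
            (t₁ ^ α / (t₁ + ‖y₁ - z₁‖) ^ ((n : ℝ) + α))) ≤
        C * t₁ ^ (n : ℝ) := by
  classical
  set E := EuclideanSpace ℝ (Fin n)
  set p : ℝ := (n : ℝ) * lam₁ / 2 with hpdef
  have hp : (n : ℝ) < p := by
    have : (0:ℝ) < ε₁ := hε₁
    simp only [hpdef]
    linarith
  have hq : (n : ℝ) < (n : ℝ) + α := by linarith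
  set Cp : ℝ := ∫ u : E, (1 + ‖u‖) ^ (-p) with hCp
  set Ca : ℝ := ∫ u : E, (1 + ‖u‖) ^ (-((n : ℝ) + α)) with hCa
  have hCp0 : 0 ≤ Cp := integral_nonneg fun u => Real.rpow_nonneg (by positivity) _
  have hCa0 : 0 ≤ Ca := integral_nonneg fun u => Real.rpow_nonneg (by positivity) _
  refine ⟨Cp * Ca + 1, by positivity, ?_⟩
  intro t ht x₀ z
  obtain ⟨hIp, hVp⟩ := key_int n ht hp
  obtain ⟨hIa, hVa⟩ := key_int n ht hq
  set g : E → ℝ := fun u => t ^ p * (t + ‖u‖) ^ (-p) with hgdef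
  set h : E → ℝ := fun u => t ^ α * (t + ‖u‖) ^ (-((n : ℝ) + α)) with hhdef
  have hg : Integrable g := hIp.const_mul _
  have hh : Integrable h := hIa.const_mul _
  have hh' : Integrable (fun v : E => h (v - z)) := hh.comp_sub_right z
  -- rewrite the integrand
  have hrw : ∀ x y : E,
      (t / (t + ‖x - y‖)) ^ ((n : ℝ) * lam₁ / 2) *
        (t ^ α / (t + ‖y - z‖) ^ ((n : ℝ) + α)) = g (x - y) * h (y - z) := by
    intro x y
    have h1 : (0:ℝ) < t + ‖x - y‖ := by positivity
    have h2 : (0:ℝ) < t + ‖y - z‖ := by positivity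
    rw [hgdef, hhdef]
    simp only
    rw [Real.div_rpow ht.le h1.le, Real.rpow_neg h1.le, Real.rpow_neg h2.le]
    field_simp
    rw [hpdef]; ring
  have hF : Integrable (fun q : E × E => g (q.1 - q.2) * h (q.2 - z))
      ((volume : Measure E).prod volume) := by
    have hpm : Integrable (fun q : E × E => g q.1 * h (q.2 - z))
        ((volume : Measure E).prod volume) := hg.mul_prod hh'
    have hT : MeasurePreserving (fun q : E × E => (q.1 - q.2, q.2))
        ((volume : Measure E).prod volume) ((volume : Measure E).prod volume) :=
      measurePreserving_sub_prod volume volume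
    exact (hT.integrable_comp hpm.aestronglyMeasurable).mpr hpm
  calc (∫ x : E, ∫ y : E,
          (t / (t + ‖x - y‖)) ^ ((n : ℝ) * lam₁ / 2) *
            (t ^ α / (t + ‖y - z‖) ^ ((n : ℝ) + α)))
      = ∫ x : E, ∫ y : E, g (x - y) * h (y - z) := by
        simp_rw [hrw]
    _ = ∫ y : E, ∫ x : E, g (x - y) * h (y - z) := integral_integral_swap hF
    _ = ∫ y : E, (∫ x : E, g (x - y)) * h (y - z) := by
        refine integral_congr_ae (Filter.Eventually.of_forall fun y => ?_)
        simp only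
        rw [integral_mul_const]
    _ = ∫ y : E, (∫ x : E, g x) * h (y - z) := by
        refine integral_congr_ae (Filter.Eventually.of_forall fun y => ?_)
        simp only
        rw [integral_sub_right_eq_self g y]
    _ = (∫ x : E, g x) * ∫ y : E, h (y - z) := integral_const_mul _ _
    _ = (∫ x : E, g x) * ∫ y : E, h y := by rw [integral_sub_right_eq_self h z]
    _ ≤ (Cp * Ca + 1) * t ^ (n : ℝ) := by
        have hgv : (∫ x : E, g x) = t ^ (n : ℝ) * Cp := by
          rw [hgdef]
          simp only
          rw [integral_const_mul, hVp, ← hCp, ← mul_assoc, ← Real.rpow_add ht]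
          ring_nf
        have hhv : (∫ y : E, h y) = Ca := by
          rw [hhdef]
          simp only
          rw [integral_const_mul, hVa, ← hCa, ← mul_assoc, ← Real.rpow_add ht]
          simp
        rw [hgv, hhv]
        have htn : (0:ℝ) < t ^ (n : ℝ) := Real.rpow_pos_of_pos ht _
        nlinarith [htn]
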